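/- Let L be a Lie ring, let I be a minimal ideal of L (I ≠ 0 and the only ideals of L contained in I are 0 and I) that is not contained in the center of L, and let h be a subring of L such that L = C_L(I) + h. Then h is abnormal in the subring h + I: every subring u with h ⊆ u ⊆ h + I satisfies N_{h+I}(u) = u. -/
import Mathlib


/-- Let `L` be a Lie ring, `I` a minimal ideal of `L` not contained in the
center of `L`, and `h` a subring of `L` with `L = C_L(I) + h`.  Then `h` is abnormal in the
subring `h + I`: every subring `u` with `h ⊆ u ⊆ h + I` satisfies `N_{h+I}(u) = u`. -/
theorem stmt_12 {L : Type*} [LieRing L] (I : LieIdeal ℤ L)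
    (hInz : I ≠ ⊥)
    (hmin : ∀ J : LieIdeal ℤ L, J ≤ I → J = ⊥ ∨ J = I)
    (hnc : ¬ ∀ b ∈ I, ∀ y : L, ⁅b, y⁆ = 0)
    (h : LieSubalgebra ℤ L)
    (hsum : ∀ x : L, ∃ c : L, (∀ b ∈ I, ⁅c, b⁆ = 0) ∧ ∃ y ∈ h, x = c + y) :
    ∀ u : LieSubalgebra ℤ L, h ≤ u →
      (u : Set L) ⊆ {x : L | ∃ a ∈ h, ∃ b ∈ I, x = a + b} →
      ∀ y ∈ {x : L | ∃ a ∈ h, ∃ b ∈ I, x = a + b},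
        (∀ v ∈ u, ⁅y, v⁆ ∈ u) → y ∈ u := by
  intro u hu _hsub y hy hnorm
  obtain ⟨a, ha, b, hb, rfl⟩ := hy
  -- T = I ∩ u as a Lie ideal of L
  let Tsub : Submodule ℤ L :=
    { carrier := {x | x ∈ I ∧ x ∈ u}
      add_mem' := fun ha hb => ⟨I.add_mem ha.1 hb.1, u.add_mem ha.2 hb.2⟩
      zero_mem' := ⟨I.zero_mem, u.zero_mem⟩
      smul_mem' := fun n x hx => ⟨I.smul_mem n hx.1, u.smul_mem n hx.2⟩ }
  have Tlie : ∀ (x m : L), m ∈ Tsub → ⁅x, m⁆ ∈ Tsub := by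
    intro x m hm
    obtain ⟨c, hc, a', ha', rfl⟩ := hsum x
    have h1 : ⁅c + a', m⁆ = ⁅a', m⁆ := by
      rw [add_lie, hc m hm.1, zero_add]
    rw [h1]
    exact ⟨I.lie_mem hm.1, u.lie_mem (hu ha') hm.2⟩
  let T : LieIdeal ℤ L := { Tsub with lie_mem := fun {x m} hm => Tlie x m hm }
  have hTmem : ∀ x : L, x ∈ T ↔ x ∈ I ∧ x ∈ u := fun x => Iff.rfl
  have hTle : T ≤ I := fun x hx => ((hTmem x).1 hx).1
  rcases hmin T hTle with hT | hT
  · -- T = ⊥ : u ∩ I = 0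
    have hzero : ∀ x : L, x ∈ I → x ∈ u → x = 0 := by
      intro x hxI hxu
      have : x ∈ T := (hTmem x).2 ⟨hxI, hxu⟩
      rwa [hT, LieSubmodule.mem_bot] at this
    -- b centralizes everything
    have hbcent : ∀ z : L, ⁅b, z⁆ = 0 := by
      intro z
      obtain ⟨c, hc, a', ha', rfl⟩ := hsum z
      have h1 : ⁅b, c⁆ = 0 := by
        rw [← lie_skew, hc b hb, neg_zero]
      have h2 : ⁅b, a'⁆ = 0 := by
        have hu1 : ⁅a + b, a'⁆ ∈ u := hnorm a' (hu ha')
        have hu2 : ⁅a, a'⁆ ∈ u := u.lie_mem (hu ha) (hu ha')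
        have hmemu : ⁅b, a'⁆ ∈ u := by
          have : ⁅b, a'⁆ = ⁅a + b, a'⁆ - ⁅a, a'⁆ := by
            rw [add_lie]; abel
          rw [this]; exact u.sub_mem hu1 hu2
        have hmemI : ⁅b, a'⁆ ∈ I := by
          have : ⁅b, a'⁆ = -⁅a', b⁆ := (lie_skew b a').symm
          rw [this]; exact I.neg_mem (I.lie_mem hb)
        exact hzero _ hmemI hmemu
      rw [lie_add, h1, h2, add_zero]
    -- the center ∩ I is an ideal
    let Zsub : Submodule ℤ L :=
      { carrier := {x | x ∈ I ∧ ∀ z : L, ⁅x, z⁆ = 0}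
        add_mem' := fun hx hy => ⟨I.add_mem hx.1 hy.1,
          fun z => by rw [add_lie, hx.2 z, hy.2 z, add_zero]⟩
        zero_mem' := ⟨I.zero_mem, fun z => zero_lie z⟩
        smul_mem' := fun n x hx => ⟨I.smul_mem n hx.1,
          fun z => by rw [smul_lie, hx.2 z, smul_zero]⟩ }
    let Z : LieIdeal ℤ L := { Zsub with
      lie_mem := fun {x m} hm => by
        have : ⁅x, m⁆ = (0 : L) := by
          rw [← lie_skew, hm.2 x, neg_zero]
        rw [this]; exact ⟨I.zero_mem, fun z => zero_lie z⟩ }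
    have hZmem : ∀ x : L, x ∈ Z ↔ x ∈ I ∧ ∀ z : L, ⁅x, z⁆ = 0 := fun x => Iff.rfl
    have hZle : Z ≤ I := fun x hx => ((hZmem x).1 hx).1
    rcases hmin Z hZle with hZ | hZ
    · have : b ∈ Z := (hZmem b).2 ⟨hb, hbcent⟩
      rw [hZ, LieSubmodule.mem_bot] at this
      rw [this, add_zero]
      exact hu ha
    · exfalso
      apply hnc
      intro b' hb' z
      have : b' ∈ Z := by rw [hZ]; exact hb'
      exact ((hZmem b').1 this).2 z
  · -- T = I : I ⊆ u
    have : b ∈ T := by rw [hT]; exact hb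
    exact u.add_mem (hu ha) ((hTmem b).1 this).2
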